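/- arXiv:1803.10279 — 3 statements merged into one kernel-verified Lean document; each statement's English description precedes it below -/
import Mathlib

section
/- Strong duality (zero duality gap) for cone programs: let V and W be finite-dimensional real inner product spaces, K₁ ⊆ W and K₂ ⊆ V closed convex cones, φ : V → W a linear map with adjoint φ*, and b ∈ W, C ∈ V. Suppose there exists X₀ ∈ int(K₂) with b − φ(X₀) ∈ int(K₁*), and there exists y₀ ∈ int(K₁) with φ*(y₀) − C ∈ int(K₂*). Then the primal optimal value γ = sup{⟨C, X⟩ : b − φ(X) ∈ K₁*, X ∈ K₂} equals the dual optimal value β = inf{⟨b, y⟩ : φ*(y) − C ∈ K₂*, y ∈ K₁}. -/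
open RealInnerProductSpace

private lemma cpsd_aux_nonpos {a M : ℝ} (h : ∀ c : ℝ, 0 < c → c * a ≤ M) : a ≤ 0 := by
  by_contra h'
  push_neg at h'
  have hc : (0:ℝ) < max 1 ((M+1)/a) := lt_of_lt_of_le one_pos (le_max_left _ _)
  have h2 := h _ hc
  have h3 : (M+1)/a ≤ max 1 ((M+1)/a) := le_max_right _ _
  rw [div_le_iff₀ h'] at h3
  nlinarith

private lemma cpsd_aux_nonneg {K M : ℝ} (h : ∀ c : ℝ, 0 < c → c * K ≤ M) : 0 ≤ M := by
  by_contra hM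
  push_neg at hM
  have hK : K ≤ 0 := cpsd_aux_nonpos h
  rcases eq_or_lt_of_le hK with h0 | h0
  · have := h 1 one_pos; simp [← h0] at this; linarith
  · have hc : 0 < M / (2 * K) := div_pos_of_neg_of_neg hM (by linarith)
    have := h _ hc
    have h4 : M / (2*K) * K = M/2 := by
      rw [div_mul_eq_mul_div, mul_comm 2 K, ← div_div, mul_div_assoc, div_self h0.ne, mul_one]
    rw [h4] at this
    linarith

private lemma cpsd_aux_B {γ u lam : ℝ} (h : ∀ r : ℝ, γ < r → u ≤ lam * r) :
    0 ≤ lam ∧ u ≤ lam * γ := by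
  have hlam : 0 ≤ lam := by
    by_contra hl
    push_neg at hl
    have hr : γ < max (γ+1) ((u-1)/lam) := lt_of_lt_of_le (by linarith) (le_max_left _ _)
    have h2 := h _ hr
    have h3 : (u-1)/lam ≤ max (γ+1) ((u-1)/lam) := le_max_right _ _
    rw [div_le_iff_of_neg hl] at h3
    nlinarith
  refine ⟨hlam, ?_⟩
  by_contra hu
  push_neg at hu
  set ε := (u - lam*γ)/(2*(lam+1)) with hε_def
  have hε : 0 < ε := div_pos (by linarith) (by linarith)
  have h2 := h (γ + ε) (by linarith)
  have h3 : 2*(lam+1)*ε = u - lam*γ := by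
    rw [hε_def, mul_div_cancel₀]; positivity
  nlinarith [mul_lt_mul_of_pos_right (show lam < 2*(lam+1) by linarith) hε]

private lemma cpsd_combo_lt {a b x y x' y' : ℝ} (ha : 0 ≤ a) (hb : 0 ≤ b) (hab : a + b = 1)
    (hx : x < x') (hy : y < y') : a*x + b*y < a*x' + b*y' := by
  rcases eq_or_lt_of_le ha with h0 | h0
  · have hb1 : b = 1 := by linarith
    simp [← h0, hb1, hy]
  · have := mul_lt_mul_of_pos_left hx h0
    nlinarith [mul_le_mul_of_nonneg_left hy.le hb]

private lemma cpsd_interior_add {H : Type*} [NormedAddCommGroup H] [NormedSpace ℝ H]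
    (K : ConvexCone ℝ H) {v s : H} (hv : v ∈ interior (K : Set H)) (hs : s ∈ K) :
    v + s ∈ interior (K : Set H) := by
  have hsub : (· + s) '' interior (K : Set H) ⊆ (K : Set H) := by
    rintro _ ⟨x, hx, rfl⟩
    exact K.add_mem (interior_subset hx) hs
  exact interior_maximal hsub ((isOpenMap_add_right s) _ isOpen_interior) ⟨v, hv, rfl⟩

private lemma cpsd_interior_smul {H : Type*} [NormedAddCommGroup H] [NormedSpace ℝ H]
    (K : ConvexCone ℝ H) {c : ℝ} (hc : 0 < c) {v : H} (hv : v ∈ interior (K : Set H)) :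
    c • v ∈ interior (K : Set H) := by
  have hsub : (c • ·) '' interior (K : Set H) ⊆ (K : Set H) := by
    rintro _ ⟨x, hx, rfl⟩
    exact K.smul_mem hc (interior_subset hx)
  exact interior_maximal hsub ((isOpenMap_smul₀ hc.ne') _ isOpen_interior) ⟨v, hv, rfl⟩

/-- Strong duality (zero duality gap) for cone programs under Slater conditions. -/
theorem cone_program_strong_duality
    {V W : Type*}
    [NormedAddCommGroup V] [InnerProductSpace ℝ V] [FiniteDimensional ℝ V]
    [NormedAddCommGroup W] [InnerProductSpace ℝ W] [FiniteDimensional ℝ W]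
    (K₁ : ConvexCone ℝ W) (K₂ : ConvexCone ℝ V)
    (hK₁ : IsClosed (K₁ : Set W)) (hK₂ : IsClosed (K₂ : Set V))
    (φ : V →ₗ[ℝ] W) (φadj : W →ₗ[ℝ] V)
    (hadj : ∀ (x : V) (y : W), ⟪φ x, y⟫ = ⟪x, φadj y⟫)
    (b : W) (C : V)
    (hPrimalSlater : ∃ X₀ : V, X₀ ∈ interior (K₂ : Set V) ∧
      b - φ X₀ ∈ interior ((ProperCone.innerDual (K₁ : Set W)) : Set W))
    (hDualSlater : ∃ y₀ : W, y₀ ∈ interior (K₁ : Set W) ∧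
      φadj y₀ - C ∈ interior ((ProperCone.innerDual (K₂ : Set V)) : Set V)) :
    sSup {r : ℝ | ∃ X : V, X ∈ K₂ ∧ b - φ X ∈ (ProperCone.innerDual (K₁ : Set W)) ∧ r = ⟪C, X⟫}
      = sInf {r : ℝ | ∃ y : W, y ∈ K₁ ∧ φadj y - C ∈ (ProperCone.innerDual (K₂ : Set V)) ∧ r = ⟪b, y⟫} := by
  classical
  obtain ⟨X₀, hX₀i, hX₀d⟩ := hPrimalSlater
  obtain ⟨y₀, hy₀i, hy₀d⟩ := hDualSlater
  have hX₀ : X₀ ∈ K₂ := interior_subset hX₀i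
  have hy₀ : y₀ ∈ K₁ := interior_subset hy₀i
  set P := {r : ℝ | ∃ X : V, X ∈ K₂ ∧ b - φ X ∈ (ProperCone.innerDual (K₁ : Set W)) ∧ r = ⟪C, X⟫} with hPdef
  set D := {r : ℝ | ∃ y : W, y ∈ K₁ ∧ φadj y - C ∈ (ProperCone.innerDual (K₂ : Set V)) ∧ r = ⟪b, y⟫} with hDdef
  -- weak duality
  have weak : ∀ p ∈ P, ∀ d ∈ D, p ≤ d := by
    rintro p ⟨X, hX, hXf, rfl⟩ d ⟨y, hy, hyf, rfl⟩
    have h1 : 0 ≤ ⟪y, b - φ X⟫ := hXf hy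
    have h2 : 0 ≤ ⟪X, φadj y - C⟫ := hyf hX
    have h3 : ⟪y, b - φ X⟫ + ⟪X, φadj y - C⟫ = ⟪b, y⟫ - ⟪C, X⟫ := by
      rw [inner_sub_right, inner_sub_right, ← hadj, real_inner_comm y b,
        real_inner_comm y (φ X), real_inner_comm X C]
      ring
    linarith
  have hPne : (⟪C, X₀⟫ : ℝ) ∈ P := ⟨X₀, hX₀, interior_subset hX₀d, rfl⟩
  have hDne : (⟪b, y₀⟫ : ℝ) ∈ D := ⟨y₀, hy₀, interior_subset hy₀d, rfl⟩
  have hPbdd : BddAbove P := ⟨⟪b, y₀⟫, fun p hp => weak p hp _ hDne⟩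
  have hDbdd : BddBelow D := ⟨⟪C, X₀⟫, fun d hd => weak _ hPne d hd⟩
  have hle : sSup P ≤ sInf D :=
    csSup_le ⟨_, hPne⟩ fun p hp => le_csInf ⟨_, hDne⟩ fun d hd => weak p hp d hd
  refine le_antisymm hle ?_
  set γ := sSup P with hγ
  -- the open convex set A and the convex set B
  set A : Set (ℝ × W) := {p | ∃ X, X ∈ K₂ ∧ p.1 < ⟪C, X⟫ ∧
      p.2 + b - φ X ∈ interior ((ProperCone.innerDual (K₁ : Set W)) : Set W)} with hAdef
  set B : Set (ℝ × W) := {p | γ < p.1 ∧ p.2 = 0} with hBdef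
  have hAconv : Convex ℝ A := by
    rintro p ⟨Xp, hXp, hp1, hp2⟩ q ⟨Xq, hXq, hq1, hq2⟩ a c ha hc hac
    obtain rfl : c = 1 - a := by linarith
    refine ⟨a • Xp + (1-a) • Xq, K₂.convex hXp hXq ha hc hac, ?_, ?_⟩
    · have : (a • p + (1-a) • q).1 = a * p.1 + (1-a) * q.1 := rfl
      rw [this, inner_add_right, real_inner_smul_right, real_inner_smul_right]
      exact cpsd_combo_lt ha hc hac hp1 hq1
    · have hmem := (((ProperCone.innerDual (K₁ : Set W)).convex).interior) hp2 hq2 ha hc hac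
      have hkey : (a • p + (1-a) • q).2 + b - φ (a • Xp + (1-a) • Xq)
          = a • (p.2 + b - φ Xp) + (1-a) • (q.2 + b - φ Xq) := by
        have : (a • p + (1-a) • q).2 = a • p.2 + (1-a) • q.2 := rfl
        rw [this, map_add, map_smul, map_smul]
        module
      rw [hkey]
      exact hmem
  have hAopen : IsOpen A := by
    have hrw : A = ⋃ X ∈ (K₂ : Set V), (Set.Iio (⟪C, X⟫ : ℝ)) ×ˢ
        ((fun w => w + b - φ X) ⁻¹' interior ((ProperCone.innerDual (K₁ : Set W)) : Set W)) := by
      ext p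
      simp only [hAdef, Set.mem_setOf_eq, Set.mem_iUnion, Set.mem_prod, Set.mem_preimage,
        Set.mem_Iio, SetLike.mem_coe]
      constructor
      · rintro ⟨X, h1, h2, h3⟩; exact ⟨X, h1, h2, h3⟩
      · rintro ⟨X, h1, h2, h3⟩; exact ⟨X, h1, h2, h3⟩
    rw [hrw]
    refine isOpen_biUnion fun X _ => IsOpen.prod isOpen_Iio ?_
    exact IsOpen.preimage ((continuous_id.add continuous_const).sub continuous_const) isOpen_interior
  have hBconv : Convex ℝ B := by
    rintro p ⟨hp1, hp2⟩ q ⟨hq1, hq2⟩ a c ha hc hac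
    constructor
    · have h1 : γ = a * γ + c * γ := by rw [← add_mul, hac, one_mul]
      have h2 : (a • p + c • q).1 = a * p.1 + c * q.1 := rfl
      rw [h2, h1]
      exact cpsd_combo_lt ha hc hac hp1 hq1
    · have h2 : (a • p + c • q).2 = a • p.2 + c • q.2 := rfl
      rw [h2, hp2, hq2, smul_zero, smul_zero, add_zero]
  have hdisj : Disjoint A B := by
    rw [Set.disjoint_left]
    rintro p ⟨X, hX, hp1, hp2⟩ ⟨hq1, hq2⟩
    rw [hq2] at hp2
    have hfeas : b - φ X ∈ (ProperCone.innerDual (K₁ : Set W)) := by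
      have h5 := interior_subset hp2
      rwa [zero_add] at h5
    have : ⟪C, X⟫ ≤ γ := le_csSup hPbdd ⟨X, hX, hfeas, rfl⟩
    linarith
  obtain ⟨f, u, hfA, hfB⟩ := geometric_hahn_banach_open hAconv hAopen hBconv hdisj
  set lam := f (1, 0) with hlam_def
  set y : W := (InnerProductSpace.toDual ℝ W).symm
      (f.comp (ContinuousLinearMap.inr ℝ ℝ W)) with hy_def
  have hf_eval : ∀ (r : ℝ) (w : W), f (r, w) = lam * r + ⟪y, w⟫ := by
    intro r w
    have h1 : ((r, w) : ℝ × W) = r • ((1:ℝ), (0:W)) + ((0:ℝ), w) := by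
      simp [Prod.ext_iff]
    rw [h1, map_add, map_smul, hy_def, InnerProductSpace.toDual_symm_apply]
    simp [mul_comm, hlam_def]
  have hBineq : ∀ r : ℝ, γ < r → u ≤ lam * r := by
    intro r hr
    have h2 := hfB (r, 0) ⟨hr, rfl⟩
    rw [hf_eval] at h2
    simpa using h2
  obtain ⟨hlam0, hulam⟩ := cpsd_aux_B hBineq
  -- lam is strictly positive
  have hlampos : 0 < lam := by
    rcases eq_or_lt_of_le hlam0 with h0 | h0
    · exfalso
      have hpt : ((⟪C, X₀⟫ - 1 : ℝ), (0 : W)) ∈ A := by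
        refine ⟨X₀, hX₀, by simp only [Prod.fst]; linarith, ?_⟩
        rwa [zero_add]
      have h2 := hfA _ hpt
      rw [hf_eval] at h2
      rw [← h0, zero_mul] at hulam
      rw [← h0] at h2
      simp at h2
      linarith
    · exact h0
  -- (i): y is ≤ 0 against the dual cone of K₁
  have hys : ∀ s ∈ (ProperCone.innerDual (K₁ : Set W)), ⟪y, s⟫ ≤ 0 := by
    intro s hs
    refine cpsd_aux_nonpos (M := u - lam * (⟪C, X₀⟫ - 1)) ?_
    intro c hc
    have hvmem : (b - φ X₀) + c • s ∈ interior ((ProperCone.innerDual (K₁ : Set W)) : Set W) :=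
      cpsd_interior_add (ProperCone.innerDual (K₁ : Set W) : ConvexCone ℝ W) hX₀d ((ProperCone.innerDual (K₁ : Set W)).smul_mem hs hc.le)
    have hpt : ((⟪C, X₀⟫ - 1 : ℝ), c • s) ∈ A := by
      refine ⟨X₀, hX₀, by simp only [Prod.fst]; linarith, ?_⟩
      have : c • s + b - φ X₀ = (b - φ X₀) + c • s := by abel
      rw [this]; exact hvmem
    have h2 := hfA _ hpt
    rw [hf_eval, real_inner_smul_right] at h2
    linarith
  -- (ii): dual feasibility direction
  have hXineq : ∀ x ∈ (K₂ : Set V), lam * ⟪C, x⟫ + ⟪y, φ x⟫ ≤ 0 := by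
    intro x hx
    refine cpsd_aux_nonpos (M := u - lam * ⟪C, X₀⟫ + lam) ?_
    intro c hc
    have hX' : X₀ + c • x ∈ K₂ := K₂.add_mem hX₀ (K₂.smul_mem hc hx)
    have hpt : ((⟪C, X₀⟫ + c * ⟪C, x⟫ - 1 : ℝ), c • φ x) ∈ A := by
      refine ⟨X₀ + c • x, hX', ?_, ?_⟩
      · show (⟪C, X₀⟫ + c * ⟪C, x⟫ - 1 : ℝ) < _
        rw [inner_add_right, real_inner_smul_right]; linarith
      · have : c • φ x + b - φ (X₀ + c • x) = b - φ X₀ := by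
          rw [map_add, map_smul]; abel
        rw [this]; exact hX₀d
    have h2 := hfA _ hpt
    rw [hf_eval, real_inner_smul_right] at h2
    nlinarith
  -- (v): value bound
  have hv : 0 ≤ lam * γ + ⟪y, b⟫ := by
    refine cpsd_aux_nonneg (K := lam * ⟪C, X₀⟫ - lam + ⟪y, b⟫) ?_
    intro c hc
    have hpt : ((c * ⟪C, X₀⟫ - c : ℝ), (c - 1) • b) ∈ A := by
      refine ⟨c • X₀, K₂.smul_mem hc hX₀, ?_, ?_⟩
      · show (c * ⟪C, X₀⟫ - c : ℝ) < _
        rw [real_inner_smul_right]; linarith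
      · have : (c - 1) • b + b - φ (c • X₀) = c • (b - φ X₀) := by
          rw [map_smul, smul_sub, sub_smul, one_smul]; abel
        rw [this]
        exact cpsd_interior_smul (ProperCone.innerDual (K₁ : Set W) : ConvexCone ℝ W) hc hX₀d
    have h2 := hfA _ hpt
    rw [hf_eval, real_inner_smul_right] at h2
    nlinarith
  -- construct the dual feasible point
  set y' : W := lam⁻¹ • (-y) with hy'_def
  have hny : -y ∈ K₁ := by
    have h2 : -y ∈ ProperCone.innerDual ((ProperCone.innerDual (K₁ : Set W)) : Set W) := by
      rw [ProperCone.mem_innerDual]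
      intro x hx
      rw [inner_neg_right]
      have := hys x hx
      rw [real_inner_comm] at this
      linarith
    by_contra hn
    obtain ⟨f, u, hfK, hfy⟩ := geometric_hahn_banach_closed_point K₁.convex hK₁ hn
    have hf0 : ∀ a ∈ K₁, f a ≤ 0 := fun a ha => cpsd_aux_nonpos (M := u) (fun c hc => by
      have := hfK _ (K₁.smul_mem hc ha); rw [map_smul, smul_eq_mul] at this; exact this.le)
    have hu : 0 ≤ u := cpsd_aux_nonneg (K := f y₀) (fun c hc => by
      have := hfK _ (K₁.smul_mem hc hy₀); rw [map_smul, smul_eq_mul] at this; exact this.le)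
    have hs : -(InnerProductSpace.toDual ℝ W).symm f ∈ ProperCone.innerDual (K₁ : Set W) := by
      rw [ProperCone.mem_innerDual]
      intro a ha
      rw [inner_neg_right, real_inner_comm, InnerProductSpace.toDual_symm_apply]
      linarith [hf0 a ha]
    have h6 := hys _ hs
    rw [inner_neg_right, real_inner_comm, InnerProductSpace.toDual_symm_apply] at h6
    rw [map_neg] at hfy
    linarith
  have hy'K₁ : y' ∈ K₁ := K₁.smul_mem (inv_pos.2 hlampos) hny
  have hfeas' : φadj y' - C ∈ (ProperCone.innerDual (K₂ : Set V)) := by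
    rw [ProperCone.mem_innerDual]
    intro x hx
    have hid : φadj y' - C = (-(lam⁻¹)) • (φadj y + lam • C) := by
      rw [hy'_def]
      simp only [map_smul, map_neg, smul_add, smul_smul, neg_smul, neg_mul]
      rw [inv_mul_cancel₀ hlampos.ne']
      module
    rw [hid, real_inner_smul_right]
    have h2 := hXineq x hx
    have h3 : ⟪x, φadj y + lam • C⟫ = ⟪y, φ x⟫ + lam * ⟪C, x⟫ := by
      rw [inner_add_right, real_inner_smul_right, ← hadj, real_inner_comm (φ x) y,
        real_inner_comm x C]
    rw [h3]
    have h4 : (0:ℝ) ≤ lam⁻¹ := (inv_pos.2 hlampos).le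
    nlinarith
  have hval : ⟪b, y'⟫ ≤ γ := by
    rw [hy'_def, real_inner_smul_right, inner_neg_right]
    have h5 : -⟪b, y⟫ ≤ lam * γ := by
      have hcomm := real_inner_comm b y
      linarith
    calc lam⁻¹ * -⟪b, y⟫ ≤ lam⁻¹ * (lam * γ) :=
          mul_le_mul_of_nonneg_left h5 (inv_pos.2 hlampos).le
      _ = γ := by rw [← mul_assoc, inv_mul_cancel₀ hlampos.ne', one_mul]
  exact le_trans (csInf_le hDbdd ⟨y', hy'K₁, hfeas', rfl⟩) hval
end

section
/- Primal attainment for cone programs: let V and W be finite-dimensional real inner product spaces, K₁ ⊆ W and K₂ ⊆ V closed convex cones, φ : V → W a linear map with adjoint φ*, and b ∈ W, C ∈ V. Suppose there exists X₀ ∈ int(K₂) with b − φ(X₀) ∈ int(K₁*), and there exists y₀ ∈ int(K₁) with φ*(y₀) − C ∈ int(K₂*). Then there exists a primal-feasible point X* (i.e., X* ∈ K₂ and b − φ(X*) ∈ K₁*) such that ⟨C, X*⟩ = sup{⟨C, X⟩ : b − φ(X) ∈ K₁*, X ∈ K₂}; in particular the supremum is attained. -/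
open RealInnerProductSpace

/-- Primal attainment for cone programs under Slater conditions. -/
theorem cone_program_primal_attainment
    {V W : Type*}
    [NormedAddCommGroup V] [InnerProductSpace ℝ V] [FiniteDimensional ℝ V]
    [NormedAddCommGroup W] [InnerProductSpace ℝ W] [FiniteDimensional ℝ W]
    (K₁ : ConvexCone ℝ W) (K₂ : ConvexCone ℝ V)
    (hK₁ : IsClosed (K₁ : Set W)) (hK₂ : IsClosed (K₂ : Set V))
    (φ : V →ₗ[ℝ] W) (φadj : W →ₗ[ℝ] V)
    (hadj : ∀ (x : V) (y : W), ⟪φ x, y⟫ = ⟪x, φadj y⟫)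
    (b : W) (C : V)
    (hPrimalSlater : ∃ X₀ : V, X₀ ∈ interior (K₂ : Set V) ∧
      b - φ X₀ ∈ interior (ProperCone.innerDual (K₁ : Set W) : Set W))
    (hDualSlater : ∃ y₀ : W, y₀ ∈ interior (K₁ : Set W) ∧
      φadj y₀ - C ∈ interior (ProperCone.innerDual (K₂ : Set V) : Set V)) :
    ∃ Xstar : V, Xstar ∈ K₂ ∧ b - φ Xstar ∈ ProperCone.innerDual (K₁ : Set W) ∧
      ⟪C, Xstar⟫ =
        sSup {r : ℝ | ∃ X : V, X ∈ K₂ ∧ b - φ X ∈ ProperCone.innerDual (K₁ : Set W) ∧ r = ⟪C, X⟫} := by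
  obtain ⟨X₀, hX₀int, hbX₀int⟩ := hPrimalSlater
  obtain ⟨y₀, hy₀int, hdint⟩ := hDualSlater
  have hX₀ : X₀ ∈ K₂ := interior_subset hX₀int
  have hbX₀ : b - φ X₀ ∈ ProperCone.innerDual (K₁ : Set W) := interior_subset hbX₀int
  have hy₀ : y₀ ∈ (K₁ : Set W) := interior_subset hy₀int
  set d : V := φadj y₀ - C with hd
  obtain ⟨ε, hε, hball⟩ := Metric.mem_nhds_iff.mp (mem_interior_iff_mem_nhds.mp hdint)
  have hcoer : ∀ X ∈ K₂, (ε/2) * ‖X‖ ≤ ⟪d, X⟫ := by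
    intro X hX
    rcases eq_or_ne X 0 with rfl | hX0
    · simp
    · have hXn : (0:ℝ) < ‖X‖ := norm_pos_iff.mpr hX0
      have hmem : d - ((ε/2)/‖X‖) • X ∈ ProperCone.innerDual (K₂ : Set V) := by
        apply hball
        rw [Metric.mem_ball, dist_eq_norm]
        have : ‖d - ((ε/2)/‖X‖) • X - d‖ = ε/2 := by
          rw [sub_sub_cancel_left, norm_neg, norm_smul, Real.norm_eq_abs,
            abs_of_pos (by positivity), div_mul_cancel₀]
          exact hXn.ne'
        rw [this]; linarith
      have h0 := ProperCone.mem_innerDual.mp hmem hX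
      rw [inner_sub_right, real_inner_smul_right, real_inner_self_eq_norm_sq,
        real_inner_comm d X] at h0
      have heq : (ε/2)/‖X‖ * (‖X‖^2) = ε/2 * ‖X‖ := by
        field_simp
      nlinarith
  have hub : ∀ X : V, X ∈ K₂ → b - φ X ∈ ProperCone.innerDual (K₁ : Set W) →
      ⟪C, X⟫ ≤ ⟪y₀, b⟫ - (ε/2) * ‖X‖ := by
    intro X hX hbX
    have h1 : (0:ℝ) ≤ ⟪y₀, b - φ X⟫ := ProperCone.mem_innerDual.mp hbX hy₀
    have h2 := hcoer X hX
    have key : ⟪C, X⟫ = ⟪y₀, φ X⟫ - ⟪d, X⟫ := by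
      rw [hd, inner_sub_left, real_inner_comm X (φadj y₀), ← hadj, real_inner_comm y₀ (φ X)]; ring
    rw [inner_sub_right] at h1
    linarith [key]
  -- superlevel set
  set S : Set V := {X | X ∈ (K₂ : Set V)} ∩
      ({X | b - φ X ∈ (ProperCone.innerDual (K₁ : Set W) : Set W)} ∩ {X | ⟪C, X₀⟫ ≤ ⟪C, X⟫}) with hSdef
  have hScont : Continuous fun X : V => (⟪C, X⟫ : ℝ) :=
    continuous_const.inner continuous_id
  have hSclosed : IsClosed S := by
    refine hK₂.inter (IsClosed.inter ?_ ?_)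
    · exact (ProperCone.innerDual _).isClosed.preimage
        (continuous_const.sub φ.continuous_of_finiteDimensional)
    · exact isClosed_le continuous_const hScont
  set R : ℝ := (⟪y₀, b⟫ - ⟪C, X₀⟫) / (ε/2) with hR
  have hSsub : S ⊆ Metric.closedBall 0 R := by
    rintro X ⟨hX, hbX, hval⟩
    simp only [Set.mem_setOf_eq] at hX hbX hval
    have h3 := hub X hX hbX
    rw [Metric.mem_closedBall, dist_zero_right, hR, le_div_iff₀ (by linarith)]
    nlinarith
  have hScompact : IsCompact S :=
    (isCompact_closedBall (0:V) R).of_isClosed_subset hSclosed hSsub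
  have hX₀S : X₀ ∈ S := ⟨hX₀, hbX₀, le_refl (⟪C, X₀⟫ : ℝ)⟩
  obtain ⟨Xstar, hXstarS, hmax⟩ :=
    hScompact.exists_isMaxOn ⟨X₀, hX₀S⟩ hScont.continuousOn
  obtain ⟨hXstarK, hbXstar, hXstarVal⟩ := hXstarS
  refine ⟨Xstar, hXstarK, hbXstar, ?_⟩
  set T : Set ℝ := {r : ℝ | ∃ X : V, X ∈ K₂ ∧ b - φ X ∈ ProperCone.innerDual (K₁ : Set W) ∧ r = ⟪C, X⟫}
  have hTbdd : BddAbove T := by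
    refine ⟨⟪y₀, b⟫, ?_⟩
    rintro r ⟨X, hX, hbX, rfl⟩
    have := hub X hX hbX
    have : (0:ℝ) ≤ (ε/2) * ‖X‖ := by positivity
    linarith [hub X hX hbX]
  have hTmem : ⟪C, Xstar⟫ ∈ T := ⟨Xstar, hXstarK, hbXstar, rfl⟩
  refine le_antisymm (le_csSup hTbdd hTmem) (csSup_le ⟨_, hTmem⟩ ?_)
  rintro r ⟨X, hX, hbX, rfl⟩
  rcases le_or_gt (⟪C, X₀⟫ : ℝ) ⟪C, X⟫ with h | h
  · exact hmax ⟨hX, hbX, h⟩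
  · exact h.le.trans hXstarVal
end

section
/- Dual attainment for cone programs: let V and W be finite-dimensional real inner product spaces, K₁ ⊆ W and K₂ ⊆ V closed convex cones, φ : V → W a linear map with adjoint φ*, and b ∈ W, C ∈ V. Suppose there exists X₀ ∈ int(K₂) with b − φ(X₀) ∈ int(K₁*), and there exists y₀ ∈ int(K₁) with φ*(y₀) − C ∈ int(K₂*). Then there exists a dual-feasible point y* (i.e., y* ∈ K₁ and φ*(y*) − C ∈ K₂*) such that ⟨b, y*⟩ = inf{⟨b, y⟩ : φ*(y) − C ∈ K₂*, y ∈ K₁}; in particular the infimum is attained. -/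
open RealInnerProductSpace

/-- Dual attainment for cone programs under Slater conditions. -/
theorem cone_program_dual_attainment
    {V W : Type*}
    [NormedAddCommGroup V] [InnerProductSpace ℝ V] [FiniteDimensional ℝ V]
    [NormedAddCommGroup W] [InnerProductSpace ℝ W] [FiniteDimensional ℝ W]
    (K₁ : ConvexCone ℝ W) (K₂ : ConvexCone ℝ V)
    (hK₁ : IsClosed (K₁ : Set W)) (hK₂ : IsClosed (K₂ : Set V))
    (φ : V →ₗ[ℝ] W) (φadj : W →ₗ[ℝ] V)
    (hadj : ∀ (x : V) (y : W), ⟪φ x, y⟫ = ⟪x, φadj y⟫)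
    (b : W) (C : V)
    (hPrimalSlater : ∃ X₀ : V, X₀ ∈ interior (K₂ : Set V) ∧
      b - φ X₀ ∈ interior (ProperCone.innerDual (K₁ : Set W) : Set W))
    (hDualSlater : ∃ y₀ : W, y₀ ∈ interior (K₁ : Set W) ∧
      φadj y₀ - C ∈ interior (ProperCone.innerDual (K₂ : Set V) : Set V)) :
    ∃ ystar : W, ystar ∈ K₁ ∧ φadj ystar - C ∈ ProperCone.innerDual (K₂ : Set V) ∧
      ⟪b, ystar⟫ =
        sInf {r : ℝ | ∃ y : W, y ∈ K₁ ∧ φadj y - C ∈ ProperCone.innerDual (K₂ : Set V) ∧ r = ⟪b, y⟫} := by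
  obtain ⟨X₀, hX₀, hb⟩ := hPrimalSlater
  obtain ⟨y₀, hy₀, hy₀d⟩ := hDualSlater
  have hX₀K : X₀ ∈ (K₂ : Set V) := interior_subset hX₀
  have hy₀K : y₀ ∈ K₁ := interior_subset hy₀
  have hy₀D : φadj y₀ - C ∈ ProperCone.innerDual (K₂ : Set V) := interior_subset hy₀d
  set a : W := b - φ X₀ with ha
  obtain ⟨ε, hε, hball⟩ := Metric.isOpen_iff.mp isOpen_interior a hb
  have hballK : Metric.ball a ε ⊆ (ProperCone.innerDual (K₁ : Set W) : Set W) :=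
    hball.trans interior_subset
  set c : ℝ := ε / 2 with hc
  have hcpos : 0 < c := by positivity
  -- key coercivity bound on K₁
  have key : ∀ y : W, y ∈ K₁ → c * ‖y‖ ≤ ⟪y, a⟫ := by
    intro y hy
    rcases eq_or_ne y 0 with rfl | hy0
    · simp [inner_zero_left]
    · have hny : 0 < ‖y‖ := norm_pos_iff.mpr hy0
      set u : W := ‖y‖⁻¹ • y
      have hmem : a - c • u ∈ Metric.ball a ε := by
        have hnu : ‖u‖ = 1 := norm_smul_inv_norm hy0
        have hsub : a - c • u - a = -(c • u) := by abel
        simp only [Metric.mem_ball, dist_eq_norm, hsub, norm_neg]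
        rw [norm_smul, hnu, mul_one, Real.norm_eq_abs, abs_of_pos hcpos]
        linarith
      have h0 := ProperCone.mem_innerDual.mp (hballK hmem) hy
      have hinner : ⟪y, a - c • u⟫ = ⟪y, a⟫ - c * ⟪y, u⟫ := by
        rw [inner_sub_right, real_inner_smul_right]
      have huy : ⟪y, u⟫ = ‖y‖ := by
        rw [real_inner_smul_right, real_inner_self_eq_norm_sq]
        field_simp
      rw [hinner, huy] at h0
      linarith
  -- lower bound for objective on feasible set
  have bound : ∀ y : W, y ∈ K₁ → φadj y - C ∈ ProperCone.innerDual (K₂ : Set V) →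
      c * ‖y‖ + ⟪X₀, C⟫ ≤ ⟪b, y⟫ := by
    intro y hy hyd
    have h1 : c * ‖y‖ ≤ ⟪y, a⟫ := key y hy
    have h2 : (0:ℝ) ≤ ⟪X₀, φadj y - C⟫ := ProperCone.mem_innerDual.mp hyd hX₀K
    have e1 : ⟪y, φ X₀⟫ = ⟪X₀, φadj y⟫ := by rw [real_inner_comm, hadj]
    have h3 : ⟪y, a⟫ = ⟪b, y⟫ - ⟪X₀, φadj y - C⟫ - ⟪X₀, C⟫ := by
      rw [ha, inner_sub_right, inner_sub_right, e1, real_inner_comm y b]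
      ring
    linarith [h1, h2, h3]
  set S : Set W := {y | y ∈ K₁ ∧ φadj y - C ∈ ProperCone.innerDual (K₂ : Set V)} with hS
  have hScl : IsClosed S := by
    have : S = (K₁ : Set W) ∩ (fun y => φadj y - C) ⁻¹' (ProperCone.innerDual (K₂ : Set V) : Set V) :=
      rfl
    rw [this]
    exact hK₁.inter ((ProperCone.innerDual _).isClosed.preimage
      (φadj.continuous_of_finiteDimensional.sub continuous_const))
  set T : Set W := S ∩ {y | ⟪b, y⟫ ≤ ⟪b, y₀⟫} with hT
  have hcont : Continuous fun y : W => ⟪b, y⟫ := continuous_const.inner continuous_id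
  have hTcl : IsClosed T := hScl.inter (isClosed_le hcont continuous_const)
  have hTbd : Bornology.IsBounded T := by
    refine (Metric.isBounded_closedBall (x := (0:W))
      (r := (⟪b, y₀⟫ - ⟪X₀, C⟫) / c)).subset ?_
    rintro y ⟨⟨hy1, hy2⟩, hy3⟩
    have h4 := bound y hy1 hy2
    have hy3' : ⟪b, y⟫ ≤ ⟪b, y₀⟫ := hy3
    simp only [Metric.mem_closedBall, dist_zero_right]
    rw [le_div_iff₀ hcpos]
    nlinarith [h4, hy3']
  have hTcpt : IsCompact T := Metric.isCompact_of_isClosed_isBounded hTcl hTbd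
  have hy₀T : y₀ ∈ T := ⟨⟨hy₀K, hy₀D⟩, Set.mem_setOf.mpr le_rfl⟩
  obtain ⟨ystar, hysT, hysmin⟩ := hTcpt.exists_isMinOn ⟨y₀, hy₀T⟩ hcont.continuousOn
  obtain ⟨⟨hys1, hys2⟩, hys3⟩ := hysT
  refine ⟨ystar, hys1, hys2, ?_⟩
  have hle : ∀ y : W, y ∈ S → ⟪b, ystar⟫ ≤ ⟪b, y⟫ := by
    intro y hy
    by_cases h : ⟪b, y⟫ ≤ ⟪b, y₀⟫
    · exact hysmin ⟨hy, h⟩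
    · exact le_trans (hysmin hy₀T) (le_of_not_ge h)
  refine le_antisymm ?_ ?_
  · exact le_csInf ⟨⟪b, y₀⟫, y₀, hy₀K, hy₀D, rfl⟩
      (by rintro r ⟨y, hy1, hy2, rfl⟩; exact hle y ⟨hy1, hy2⟩)
  · have hbdd : BddBelow {r : ℝ | ∃ y : W, y ∈ K₁ ∧
        φadj y - C ∈ ProperCone.innerDual (K₂ : Set V) ∧ r = ⟪b, y⟫} := by
      refine ⟨⟪X₀, C⟫, ?_⟩
      rintro r ⟨y, hy1, hy2, rfl⟩
      have := bound y hy1 hy2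
      nlinarith [norm_nonneg y, hcpos.le]
    exact csInf_le hbdd ⟨ystar, hys1, hys2, rfl⟩
end
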